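/- Let Y be a compact metrizable space, Z ⊆ Y a closed subspace, and φ : Z → ℕ† a continuous map to the one-point compactification of discrete ℕ. Then φ extends to a continuous map Y → ℕ† if and only if for each n ∈ ℕ, the clopen subset φ⁻¹({n}) of Z is the intersection of Z with a clopen subset of Y. -/

import Mathlib

open Set

/-- A map `f : Z → X` on a closed subspace `Z` of `Y` extends to a continuous map on `Y`. -/
def ExtendsTo {X Y : Type*} [TopologicalSpace X] [TopologicalSpace Y]
    (Z : Set Y) (f : C(Z, X)) : Prop :=
  ∃ g : C(Y, X), ∀ z : Z, g z.1 = f z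

lemma isClopen_singleton_coe (n : ℕ) :
    IsClopen ({((n : ℕ) : OnePoint ℕ)} : Set (OnePoint ℕ)) := by
  constructor
  · exact isClosed_singleton
  · have : ({((n : ℕ) : OnePoint ℕ)} : Set (OnePoint ℕ)) = (↑) '' {n} := by simp
    rw [this]
    exact OnePoint.isOpenEmbedding_coe.isOpenMap _ (isOpen_discrete _)

/-- A map `φ : Z → ℕ†` extends to `Y` iff every `φ⁻¹({n})` is the intersection with `Z`
of a clopen subset of `Y` (the clopen intersection property). -/
theorem onePoint_nat_extension_iff {Y : Type*} [MetricSpace Y] [CompactSpace Y]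
    (Z : Set Y) (hZ : IsClosed Z) (φ : C(Z, OnePoint ℕ)) :
    ExtendsTo Z φ ↔
      ∀ n : ℕ, ∃ V : Set Y, IsClopen V ∧
        ((Subtype.val ⁻¹' V : Set Z) = φ ⁻¹' {((n : ℕ) : OnePoint ℕ)}) := by
  constructor
  · rintro ⟨g, hg⟩ n
    refine ⟨g ⁻¹' {((n : ℕ) : OnePoint ℕ)}, (isClopen_singleton_coe n).preimage g.continuous, ?_⟩
    ext z
    simp [hg z]
  · intro h
    choose V hVc hV using h
    -- disjointify
    set W : ℕ → Set Y := fun n => V n \ ⋃ k ∈ Finset.range n, V k with hWdef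
    have hWc : ∀ n, IsClopen (W n) := by
      intro n
      exact (hVc n).diff (isClopen_biUnion_finset fun k _ => hVc k)
    have hWZ : ∀ n, (Subtype.val ⁻¹' W n : Set Z) = φ ⁻¹' {((n : ℕ) : OnePoint ℕ)} := by
      intro n
      ext z
      have hz : ∀ k, (z ∈ Subtype.val ⁻¹' V k) ↔ φ z = ((k : ℕ) : OnePoint ℕ) := by
        intro k
        have := hV k
        constructor
        · intro hzk
          have : z ∈ φ ⁻¹' {((k : ℕ) : OnePoint ℕ)} := (hV k) ▸ hzk
          simpa using this
        · intro hzk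
          have : z ∈ φ ⁻¹' {((k : ℕ) : OnePoint ℕ)} := by simpa using hzk
          rw [← hV k] at this; exact this
      simp only [hWdef, mem_preimage, mem_diff, mem_iUnion, Finset.mem_range, mem_singleton_iff]
      constructor
      · rintro ⟨h1, _⟩
        exact (hz n).1 h1
      · intro h1
        refine ⟨(hz n).2 h1, ?_⟩
        rintro ⟨k, hk, hzk⟩
        have := (hz k).1 hzk
        rw [h1] at this
        have : n = k := by
          exact_mod_cast OnePoint.coe_eq_coe.mp this
        omega
    have hdisj : ∀ m n : ℕ, m ≠ n → ∀ y, y ∈ W m → y ∉ W n := by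
      intro m n hmn y hym hyn
      rcases Nat.lt_or_ge m n with hlt | hge
      · exact hyn.2 (mem_biUnion (Finset.mem_range.mpr hlt) hym.1)
      · have : m > n := lt_of_le_of_ne hge (Ne.symm hmn)
        exact hym.2 (mem_biUnion (Finset.mem_range.mpr this) hyn.1)
    classical
    set g : Y → OnePoint ℕ := fun y =>
      if h : ∃ n, y ∈ W n then ((h.choose : ℕ) : OnePoint ℕ) else OnePoint.infty with hgdef
    have hgW : ∀ n y, y ∈ W n → g y = ((n : ℕ) : OnePoint ℕ) := by
      intro n y hy
      have hex : ∃ m, y ∈ W m := ⟨n, hy⟩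
      simp only [hgdef, dif_pos hex]
      have hm := hex.choose_spec
      by_contra hne
      have : hex.choose ≠ n := fun he => hne (by rw [he])
      exact hdisj _ _ this y hm hy
    have hginf : ∀ y, (∀ n, y ∉ W n) → g y = OnePoint.infty := by
      intro y hy
      exact dif_neg (by push_neg; exact hy)
    have hgcont : Continuous g := by
      rw [continuous_def]
      intro s hs
      by_cases hinf : OnePoint.infty ∈ s
      · -- complement of finite union of clopen
        have hF : IsCompact (((↑) ⁻¹' s : Set ℕ))ᶜ :=
          ((OnePoint.isOpen_iff_of_mem' hinf).mp hs).1
        have hFfin : (((↑) ⁻¹' s : Set ℕ))ᶜ.Finite := hF.finite_of_discrete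
        have heq : g ⁻¹' s = (⋃ n ∈ (((↑) ⁻¹' s : Set ℕ))ᶜ, W n)ᶜ := by
          ext y
          simp only [mem_preimage, mem_compl_iff, mem_iUnion, not_exists]
          constructor
          · intro hy n hn hyn
            have := hgW n y hyn
            rw [this] at hy
            exact hn hy
          · intro hy
            by_cases hex : ∃ n, y ∈ W n
            · obtain ⟨n, hn⟩ := hex
              rw [hgW n y hn]
              by_contra hns
              exact hy n hns hn
            · push_neg at hex
              rw [hginf y hex]; exact hinf
        rw [heq]
        exact (hFfin.isClosed_biUnion fun n _ => (hWc n).1).isOpen_compl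
      · -- union of clopen
        have heq : g ⁻¹' s = ⋃ n, ⋃ _ : ((n : ℕ) : OnePoint ℕ) ∈ s, W n := by
          ext y
          simp only [mem_preimage, mem_iUnion]
          constructor
          · intro hy
            by_cases hex : ∃ n, y ∈ W n
            · obtain ⟨n, hn⟩ := hex
              exact ⟨n, by rwa [hgW n y hn] at hy, hn⟩
            · push_neg at hex
              rw [hginf y hex] at hy
              exact absurd hy hinf
          · rintro ⟨n, hns, hn⟩
            rw [hgW n y hn]; exact hns
        rw [heq]
        exact isOpen_iUnion fun n => isOpen_iUnion fun _ => (hWc n).2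
    refine ⟨⟨g, hgcont⟩, ?_⟩
    intro z
    cases hφ : φ z with
    | infty =>
        have : ∀ n, (z : Y) ∉ W n := by
          intro n hn
          have : z ∈ (Subtype.val ⁻¹' W n : Set Z) := hn
          rw [hWZ n] at this
          simp only [mem_preimage, mem_singleton_iff] at this
          rw [hφ] at this
          exact OnePoint.infty_ne_coe n this
        simpa using hginf z this
    | coe n =>
        have : z ∈ (Subtype.val ⁻¹' W n : Set Z) := by
          rw [hWZ n]
          simp only [mem_preimage, mem_singleton_iff]
          exact hφ
        simpa using hgW n z this
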